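/- For all natural numbers m, the number of 2m-step closed walks at vertex 1 in the half-line graph ℤ₊ equals C(2m,m) − C(2m,m+2) = C_{m+1}, the (m+1)-st Catalan number. -/

import Mathlib

/-- The half-line graph on `ℕ = {0,1,2,...}`: `x ∼ y` iff `|x - y| = 1`. -/
def latN : SimpleGraph ℕ where
  Adj x y := |(x : ℤ) - y| = 1
  symm := ⟨by intro x y h; rwa [abs_sub_comm]⟩
  loopless := ⟨by intro x h; simp at h⟩

/-- The number of `m`-step closed walks at `o` in `G`. -/
noncomputable def walkCount {V : Type*} (G : SimpleGraph V) (o : V) (m : ℕ) : ℕ :=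
  Nat.card {w : G.Walk o o // w.length = m}

open DyckStep List

lemma latN_adj {x y : ℕ} : latN.Adj x y ↔ y = x + 1 ∨ x = y + 1 := by
  show |(x:ℤ) - y| = 1 ↔ _
  rw [abs_eq (by norm_num : (0:ℤ) ≤ 1)]
  omega

/-- The step sequence of a walk. -/
def steps : ∀ {x y : ℕ}, latN.Walk x y → List DyckStep
  | _, _, .nil => []
  | x, _, .cons (v := b) _ p => (if x < b then U else D) :: steps p

lemma length_steps : ∀ {x y : ℕ} (w : latN.Walk x y), (steps w).length = w.length
  | _, _, .nil => rfl
  | _, _, .cons _ p => by simp [steps, length_steps p]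

lemma steps_balance : ∀ {x y : ℕ} (w : latN.Walk x y),
    (steps w).count D + y = (steps w).count U + x
  | _, _, .nil => rfl
  | x, y, .cons (v := b) h p => by
    have hb := latN_adj.mp h
    have ih := steps_balance p
    rcases hb with hb | hb <;> subst hb <;>
      simp [steps, count_cons] at ih ⊢ <;> omega

lemma steps_prefix : ∀ {x y : ℕ} (w : latN.Walk x y) (i : ℕ),
    ((steps w).take i).count D ≤ ((steps w).take i).count U + x
  | _, _, .nil, i => by simp [steps]
  | x, y, .cons (v := b) h p, i => by
    have hb := latN_adj.mp h
    match i with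
    | 0 => simp
    | j + 1 =>
      have ih := steps_prefix p j
      rcases hb with hb | hb <;> subst hb <;>
        simp [steps, count_cons] at ih ⊢ <;> omega

lemma steps_injective : ∀ {x y : ℕ} (w₁ w₂ : latN.Walk x y),
    steps w₁ = steps w₂ → w₁ = w₂
  | _, _, .nil, .nil, _ => rfl
  | _, _, .nil, .cons _ _, h => by simp [steps] at h
  | _, _, .cons _ _, .nil, h => by simp [steps] at h
  | x, y, .cons (v := b₁) h₁ p₁, .cons (v := b₂) h₂ p₂, h => by
    have hb₁ := latN_adj.mp h₁
    have hb₂ := latN_adj.mp h₂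
    have hb : b₁ = b₂ := by
      simp only [steps, List.cons.injEq] at h
      rcases h.1 with h'
      by_cases c₁ : x < b₁ <;> by_cases c₂ : x < b₂ <;>
        simp [c₁, c₂] at h' <;> omega
    subst hb
    simp only [steps, List.cons.injEq] at h
    rw [steps_injective p₁ p₂ h.2]

lemma count_U_add_count_D (l : List DyckStep) : l.count U + l.count D = l.length := by
  induction l with
  | nil => rfl
  | cons s t ih => cases s <;> simp [count_cons] <;> omega

lemma exists_walk : ∀ (l : List DyckStep) (x z : ℕ),
    (∀ i, (l.take i).count D ≤ (l.take i).count U + x) →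
    z + l.count D = x + l.count U →
    ∃ w : latN.Walk x z, steps w = l
  | [], x, z, _, hbal => by
    have : z = x := by simpa using hbal
    subst this
    exact ⟨.nil, rfl⟩
  | U :: l, x, z, hpre, hbal => by
    have hadj : latN.Adj x (x + 1) := latN_adj.mpr (Or.inl rfl)
    have hpre' : ∀ i, (l.take i).count D ≤ (l.take i).count U + (x + 1) := by
      intro i
      have := hpre (i + 1)
      simp [count_cons] at this; omega
    have hbal' : z + l.count D = (x + 1) + l.count U := by
      simp [count_cons] at hbal; omega
    obtain ⟨w, hw⟩ := exists_walk l (x + 1) z hpre' hbal'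
    exact ⟨.cons hadj w, by simp [steps, hw]⟩
  | D :: l, x, z, hpre, hbal => by
    have hx : 1 ≤ x := by have := hpre 1; simpa using this
    obtain ⟨x', rfl⟩ : ∃ x', x = x' + 1 := ⟨x - 1, by omega⟩
    have hadj : latN.Adj (x' + 1) x' := latN_adj.mpr (Or.inr rfl)
    have hpre' : ∀ i, (l.take i).count D ≤ (l.take i).count U + x' := by
      intro i
      have := hpre (i + 1)
      simp [count_cons] at this; omega
    have hbal' : z + l.count D = x' + l.count U := by
      simp [count_cons] at hbal; omega
    obtain ⟨w, hw⟩ := exists_walk l x' z hpre' hbal'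
    exact ⟨.cons hadj w, by simp [steps, hw]⟩

/-- Closed walks at `0` of length `2n` are counted by Dyck words of semilength `n`. -/
lemma card_walk_zero (n : ℕ) :
    Nat.card {w : latN.Walk 0 0 // w.length = 2 * n}
      = Nat.card {p : DyckWord // p.semilength = n} := by
  have key : ∀ (w : latN.Walk 0 0), (steps w).count U = (steps w).count D := by
    intro w
    have := steps_balance w
    omega
  refine Nat.card_eq_of_bijective
    (fun w => ⟨⟨steps w.1, key w.1, by simpa using steps_prefix w.1⟩, by
      have hb := key w.1
      have hl := length_steps w.1
      have hc := count_U_add_count_D (steps w.1)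
      have := w.2
      show (steps w.1).count U = n
      omega⟩) ⟨?_, ?_⟩
  · intro w₁ w₂ h
    apply Subtype.ext
    apply steps_injective
    simpa [Subtype.ext_iff, DyckWord.ext_iff] using h
  · rintro ⟨p, hp⟩
    obtain ⟨w, hw⟩ := exists_walk p.toList 0 0
      (by simpa using p.count_D_le_count_U) (by simpa using p.count_U_eq_count_D.symm)
    have hlen : w.length = 2 * n := by
      rw [← length_steps w, hw, ← p.two_mul_semilength_eq_length, hp]
    exact ⟨⟨w, hlen⟩, by
      apply Subtype.ext
      apply DyckWord.ext
      simpa using hw⟩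

lemma card_walk_one (m : ℕ) :
    Nat.card {w : latN.Walk 1 1 // w.length = 2 * m}
      = Nat.card {w : latN.Walk 0 0 // w.length = 2 * (m + 1)} := by
  have h01 : latN.Adj 0 1 := latN_adj.mpr (Or.inl rfl)
  have h10 : latN.Adj 1 0 := h01.symm
  refine Nat.card_eq_of_bijective
    (fun w => ⟨.cons h01 (w.1.concat h10), by
      simp [SimpleGraph.Walk.length_concat, w.2]; omega⟩) ⟨?_, ?_⟩
  · rintro ⟨w₁, hw₁⟩ ⟨w₂, hw₂⟩ h
    simp only [Subtype.mk.injEq, SimpleGraph.Walk.cons.injEq, heq_eq_eq, true_and] at h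
    apply Subtype.ext
    have := congrArg SimpleGraph.Walk.reverse h
    simp only [SimpleGraph.Walk.reverse_concat, SimpleGraph.Walk.cons.injEq, heq_eq_eq,
      true_and] at this
    have := congrArg SimpleGraph.Walk.reverse this
    simpa using this
  · rintro ⟨w, hw⟩
    have hnil : ¬ w.Nil := by
      rw [SimpleGraph.Walk.not_nil_iff_lt_length]; omega
    obtain ⟨u, h, q, rfl⟩ := SimpleGraph.Walk.not_nil_iff.mp hnil
    obtain rfl : u = 1 := by rcases latN_adj.mp h with h' | h' <;> omega
    have hq : ¬ q.reverse.Nil := by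
      rw [SimpleGraph.Walk.not_nil_iff_lt_length, SimpleGraph.Walk.length_reverse]
      simp at hw; omega
    obtain ⟨u', h', r, hr⟩ := SimpleGraph.Walk.not_nil_iff.mp hq
    obtain rfl : u' = 1 := by rcases latN_adj.mp h' with h'' | h'' <;> omega
    have hq2 : q = r.reverse.concat h'.symm := by
      have := congrArg SimpleGraph.Walk.reverse hr
      simpa [SimpleGraph.Walk.reverse_concat, SimpleGraph.Walk.concat_eq_append] using this
    have hlen : r.reverse.length = 2 * m := by
      have h1 : q.length = 2 * (m + 1) - 1 := by simp at hw; omega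
      have h2 : q.reverse.length = r.length + 1 := by rw [hr]; simp
      rw [SimpleGraph.Walk.length_reverse] at h2 ⊢
      omega
    exact ⟨⟨r.reverse, hlen⟩, by apply Subtype.ext; simp [hq2]⟩

lemma catalan_eq_choose_sub (n : ℕ) :
    catalan n = (2 * n).choose n - (2 * n).choose (n + 1) := by
  have hcb : (n + 1) * catalan n = (2 * n).choose n := by
    have := succ_mul_catalan_eq_centralBinom n
    rwa [Nat.centralBinom] at this
  have hsr : (2 * n).choose (n + 1) * (n + 1) = (2 * n).choose n * n := by
    have := Nat.choose_succ_right_eq (2 * n) n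
    rwa [show 2 * n - n = n by omega] at this
  have hle : (2 * n).choose (n + 1) ≤ (2 * n).choose n := by
    have := Nat.choose_le_middle (n + 1) (2 * n)
    rwa [show 2 * n / 2 = n by omega] at this
  rw [eq_comm, Nat.sub_eq_iff_eq_add hle]
  refine Nat.eq_of_mul_eq_mul_right (show 0 < n + 1 by omega) ?_
  rw [add_mul, hsr, mul_comm (catalan n) (n + 1), hcb, Nat.mul_succ]
  omega

lemma choose_identity (m : ℕ) :
    catalan (m + 1) = Nat.choose (2 * m) m - Nat.choose (2 * m) (m + 2) := by
  rcases m with _ | m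
  · simp [catalan_succ]
  rw [catalan_eq_choose_sub]
  set a := (2 * (m + 1)).choose m with ha
  set b := (2 * (m + 1)).choose (m + 1) with hb
  set c := (2 * (m + 1)).choose (m + 2) with hc
  set d := (2 * (m + 1)).choose (m + 3) with hd
  have hB1 : (2 * (m + 1 + 1)).choose (m + 1 + 1) = a + 2 * b + c := by
    rw [show 2 * (m + 1 + 1) = (2 * (m + 1) + 1) + 1 by ring,
      Nat.choose_succ_succ, show 2 * (m + 1) + 1 = 2 * (m + 1) + 1 from rfl,
      Nat.choose_succ_succ, Nat.choose_succ_succ]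
    ring
  have hB2 : (2 * (m + 1 + 1)).choose (m + 1 + 2) = b + 2 * c + d := by
    rw [show 2 * (m + 1 + 1) = (2 * (m + 1) + 1) + 1 by ring,
      Nat.choose_succ_succ, Nat.choose_succ_succ, Nat.choose_succ_succ]
    ring
  have hac : a = c := by
    rw [ha, hc]
    have := Nat.choose_symm (show m + 2 ≤ 2 * (m + 1) by omega)
    rw [show 2 * (m + 1) - (m + 2) = m by omega] at this
    exact this
  have hcb2 : c ≤ b := by
    have := Nat.choose_le_middle (m + 2) (2 * (m + 1))
    rwa [show 2 * (m + 1) / 2 = m + 1 by omega] at this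
  have hle : (2 * (m + 1 + 1)).choose (m + 1 + 2) ≤ (2 * (m + 1 + 1)).choose (m + 1 + 1) := by
    have := Nat.choose_le_middle (m + 1 + 2) (2 * (m + 1 + 1))
    rwa [show 2 * (m + 1 + 1) / 2 = m + 1 + 1 by omega] at this
  rw [hB1, hB2]
  omega

theorem walkCount_latN_one (m : ℕ) :
    walkCount latN 1 (2 * m) = Nat.choose (2 * m) m - Nat.choose (2 * m) (m + 2) ∧
      walkCount latN 1 (2 * m) = catalan (m + 1) := by
  have hcat : walkCount latN 1 (2 * m) = catalan (m + 1) := by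
    rw [walkCount, card_walk_one, card_walk_zero, Nat.card_eq_fintype_card,
      DyckWord.card_dyckWord_semilength_eq_catalan]
  exact ⟨hcat.trans (choose_identity m), hcat⟩
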